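/- arXiv:2102.07547 — 6 statements merged into one kernel-verified Lean document; each statement's English description precedes it below -/
import Mathlib

section
/- Let B be the orthonormal basis of u(n) given by B = { (E_{rs}−E_{sr})/√2, i(E_{rs}+E_{sr})/√2 : 1 ≤ r < s ≤ n } ∪ { i E_{tt} : 1 ≤ t ≤ n }. Then for every A ∈ ℂ^{n×n}, ∑_{Z ∈ B} Z · A · Zᵀ = −Aᵀ. -/
open Matrix

lemma ekey {n : ℕ} (A : Matrix (Fin n) (Fin n) ℂ) (a b c d : Fin n) :
    Matrix.single a b (1:ℂ) * A * Matrix.single c d 1 = A b c • Matrix.single a d 1 := by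
  ext i j
  simp only [Matrix.mul_apply, Matrix.single, Matrix.smul_apply, of_apply, smul_eq_mul, ite_and]
  simp [Finset.sum_ite_eq, Finset.sum_ite_eq']
  split <;> split <;> simp_all

lemma etr {n : ℕ} (a b : Fin n) :
    (Matrix.single a b (1:ℂ))ᵀ = Matrix.single b a 1 := by
  ext i j; simp [Matrix.single, and_comm]

lemma pair_term {n : ℕ} (A : Matrix (Fin n) (Fin n) ℂ) (r s : Fin n) :
     (((Real.sqrt 2 : ℂ)⁻¹ •
            (Matrix.single r s (1 : ℂ) - Matrix.single s r (1 : ℂ))) * A *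
          ((Real.sqrt 2 : ℂ)⁻¹ •
            (Matrix.single r s (1 : ℂ) - Matrix.single s r (1 : ℂ)))ᵀ
        + ((Real.sqrt 2 : ℂ)⁻¹ • Complex.I •
            (Matrix.single r s (1 : ℂ) + Matrix.single s r (1 : ℂ))) * A *
          ((Real.sqrt 2 : ℂ)⁻¹ • Complex.I •
            (Matrix.single r s (1 : ℂ) + Matrix.single s r (1 : ℂ)))ᵀ)
      = -(A s r • Matrix.single r s 1 + A r s • Matrix.single s r 1) := by
  have h2 : ((Real.sqrt 2 : ℂ))⁻¹ * ((Real.sqrt 2 : ℂ))⁻¹ = (2:ℂ)⁻¹ := by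
    rw [← mul_inv]
    norm_num [← Complex.ofReal_mul, Real.mul_self_sqrt]
  simp only [transpose_smul, transpose_sub, transpose_add, etr, smul_mul_assoc,
    mul_smul_comm, sub_mul, mul_sub, add_mul, mul_add, ekey, smul_smul, smul_sub, smul_add,
    neg_add]
  match_scalars <;>
    simp [Complex.I_sq, Complex.I_mul_I] <;> ring_nf <;>
    simp [mul_comm, h2] <;> ring_nf <;> simp [sq, h2]

lemma diag_term {n : ℕ} (A : Matrix (Fin n) (Fin n) ℂ) (t : Fin n) :
    (Complex.I • Matrix.single t t (1 : ℂ)) * A *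
        (Complex.I • Matrix.single t t (1 : ℂ))ᵀ = -(A t t • Matrix.single t t 1) := by
  simp only [transpose_smul, etr, smul_mul_assoc, mul_smul_comm, ekey, smul_smul]
  rw [← mul_assoc, Complex.I_mul_I]
  simp

lemma sum_split {n : ℕ} (g : Fin n × Fin n → Matrix (Fin n) (Fin n) ℂ) :
    (∑ p ∈ Finset.univ.filter (fun p : Fin n × Fin n => p.1 < p.2), (g p + g p.swap))
      + ∑ t : Fin n, g (t, t) = ∑ p : Fin n × Fin n, g p := by
  rw [Finset.sum_add_distrib]
  have hswap : ∑ p ∈ Finset.univ.filter (fun p : Fin n × Fin n => p.1 < p.2), g p.swap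
      = ∑ p ∈ Finset.univ.filter (fun p : Fin n × Fin n => p.2 < p.1), g p := by
    apply Finset.sum_nbij' (fun p => Prod.swap p) (fun p => Prod.swap p) <;>
      simp [Finset.mem_filter]
  have hdiag : ∑ t : Fin n, g (t, t)
      = ∑ p ∈ Finset.univ.filter (fun p : Fin n × Fin n => p.1 = p.2), g p := by
    apply Finset.sum_nbij' (fun t => (t, t)) (fun p => p.1) <;>
      simp (config := { contextual := true }) [Finset.mem_filter, Prod.ext_iff]
  have hnot : ∑ p ∈ Finset.univ.filter (fun p : Fin n × Fin n => ¬ p.1 < p.2), g p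
      = (∑ p ∈ Finset.univ.filter (fun p : Fin n × Fin n => p.2 < p.1), g p)
        + ∑ p ∈ Finset.univ.filter (fun p : Fin n × Fin n => p.1 = p.2), g p := by
    rw [← Finset.sum_filter_add_sum_filter_not
      (Finset.univ.filter (fun p : Fin n × Fin n => ¬ p.1 < p.2)) (fun p => p.2 < p.1) g,
      Finset.filter_filter, Finset.filter_filter]
    congr 2
    · ext p; simp only [Finset.mem_filter, Finset.mem_univ, true_and]
      exact ⟨fun h => h.2, fun h => ⟨not_lt_of_gt h, h⟩⟩
    · ext p; simp only [Finset.mem_filter, Finset.mem_univ, true_and, not_lt]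
      exact ⟨fun h => le_antisymm h.2 h.1, fun h => ⟨le_of_eq h.symm, le_of_eq h⟩⟩
  rw [hswap, hdiag,
    ← Finset.sum_filter_add_sum_filter_not Finset.univ (fun p : Fin n × Fin n => p.1 < p.2) g,
    hnot, add_assoc]

lemma transpose_eq_sum {n : ℕ} (A : Matrix (Fin n) (Fin n) ℂ) :
    Aᵀ = ∑ p : Fin n × Fin n, A p.2 p.1 • Matrix.single p.1 p.2 (1:ℂ) := by
  rw [Fintype.sum_prod_type]
  nth_rewrite 1 [Matrix.matrix_eq_sum_single Aᵀ]
  simp [Matrix.smul_single]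

/-- for the standard orthonormal basis `B` of `u(n)` and any
`A ∈ ℂ^{n×n}`, `∑_{Z ∈ B} Z·A·Zᵀ = −Aᵀ`. -/
theorem conformality_un (n : ℕ) (A : Matrix (Fin n) (Fin n) ℂ) :
    (∑ p ∈ Finset.univ.filter (fun p : Fin n × Fin n => p.1 < p.2),
        (((Real.sqrt 2 : ℂ)⁻¹ •
            (Matrix.single p.1 p.2 (1 : ℂ) - Matrix.single p.2 p.1 (1 : ℂ))) * A *
          ((Real.sqrt 2 : ℂ)⁻¹ •
            (Matrix.single p.1 p.2 (1 : ℂ) - Matrix.single p.2 p.1 (1 : ℂ)))ᵀ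
        + ((Real.sqrt 2 : ℂ)⁻¹ • Complex.I •
            (Matrix.single p.1 p.2 (1 : ℂ) + Matrix.single p.2 p.1 (1 : ℂ))) * A *
          ((Real.sqrt 2 : ℂ)⁻¹ • Complex.I •
            (Matrix.single p.1 p.2 (1 : ℂ) + Matrix.single p.2 p.1 (1 : ℂ)))ᵀ))
    + ∑ t : Fin n, (Complex.I • Matrix.single t t (1 : ℂ)) * A *
        (Complex.I • Matrix.single t t (1 : ℂ))ᵀ
    = -Aᵀ := by
  set g : Fin n × Fin n → Matrix (Fin n) (Fin n) ℂ :=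
    fun p => A p.2 p.1 • Matrix.single p.1 p.2 (1:ℂ) with hg
  have hpair : ∀ p ∈ Finset.univ.filter (fun p : Fin n × Fin n => p.1 < p.2),
      (((Real.sqrt 2 : ℂ)⁻¹ •
            (Matrix.single p.1 p.2 (1 : ℂ) - Matrix.single p.2 p.1 (1 : ℂ))) * A *
          ((Real.sqrt 2 : ℂ)⁻¹ •
            (Matrix.single p.1 p.2 (1 : ℂ) - Matrix.single p.2 p.1 (1 : ℂ)))ᵀ
        + ((Real.sqrt 2 : ℂ)⁻¹ • Complex.I •
            (Matrix.single p.1 p.2 (1 : ℂ) + Matrix.single p.2 p.1 (1 : ℂ))) * A *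
          ((Real.sqrt 2 : ℂ)⁻¹ • Complex.I •
            (Matrix.single p.1 p.2 (1 : ℂ) + Matrix.single p.2 p.1 (1 : ℂ)))ᵀ)
      = -(g p + g p.swap) := by
    intro p _
    rw [pair_term A p.1 p.2]
    rfl
  have hdiag : ∀ t : Fin n, (Complex.I • Matrix.single t t (1 : ℂ)) * A *
        (Complex.I • Matrix.single t t (1 : ℂ))ᵀ = -(g (t, t)) := fun t => diag_term A t
  rw [Finset.sum_congr rfl hpair, Finset.sum_congr rfl (fun t _ => hdiag t),
    Finset.sum_neg_distrib, Finset.sum_neg_distrib, ← neg_add, sum_split g,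
    ← transpose_eq_sum]
end

section
/- Let B⁺ be the orthonormal basis of u(n) given by B⁺ = { (E_{rs}−E_{sr})/√2, i(E_{rs}+E_{sr})/√2 : 1 ≤ r < s ≤ n } ∪ { i E_{tt} : 1 ≤ t ≤ n }, and let B⁻ = i·B⁺ = { iZ : Z ∈ B⁺ }. Then ∑_{Z ∈ B⁺} Z² − ∑_{Z ∈ B⁻} Z² = −2n · Iₙ. -/
open Matrix

lemma casimir_pair_term (n : ℕ) (r s : Fin n) (h : r ≠ s) :
    (((Real.sqrt 2 : ℂ)⁻¹ •
        (Matrix.single r s (1 : ℂ) - Matrix.single s r (1 : ℂ))) ^ 2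
      + ((Real.sqrt 2 : ℂ)⁻¹ • Complex.I •
        (Matrix.single r s (1 : ℂ) + Matrix.single s r (1 : ℂ))) ^ 2)
    = -(Matrix.single r r (1 : ℂ) + Matrix.single s s (1 : ℂ)) := by
  have hAA : Matrix.single r s (1:ℂ) * Matrix.single r s 1 = 0 :=
    single_mul_single_of_ne (h := h.symm) ..
  have hBB : Matrix.single s r (1:ℂ) * Matrix.single s r 1 = 0 :=
    single_mul_single_of_ne (h := h) ..
  have hAB : Matrix.single r s (1:ℂ) * Matrix.single s r 1 = Matrix.single r r 1 := by
    rw [single_mul_single_same, one_mul]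
  have hBA : Matrix.single s r (1:ℂ) * Matrix.single r s 1 = Matrix.single s s 1 := by
    rw [single_mul_single_same, one_mul]
  have h2 : (((Real.sqrt 2 : ℂ)⁻¹) ^ 2) = (2:ℂ)⁻¹ := by
    rw [← Complex.ofReal_inv, ← Complex.ofReal_pow]
    norm_num [Real.sq_sqrt]
  rw [smul_smul, smul_pow, smul_pow, mul_pow, h2, Complex.I_sq]
  set A := Matrix.single r s (1:ℂ)
  set B := Matrix.single s r (1:ℂ)
  have e1 : (A - B)^2 = A*A - A*B - B*A + B*B := by
    rw [sq]; noncomm_ring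
  have e2 : (A + B)^2 = A*A + A*B + B*A + B*B := by
    rw [sq]; noncomm_ring
  rw [e1, e2, hAA, hBB, hAB, hBA]
  simp only [zero_sub, sub_add, add_zero, zero_add, sub_zero]
  module

lemma casimir_sum_diag_one (n : ℕ) : ∑ t : Fin n, Matrix.single t t (1:ℂ) = 1 := by
  ext i j
  rw [Matrix.sum_apply, Matrix.one_apply]
  simp only [Matrix.single, of_apply]
  rcases eq_or_ne i j with h | h
  · subst h
    rw [Finset.sum_eq_single i (by intro t _ ht; simp [ht]) (by simp)]
    simp
  · rw [if_neg h, Finset.sum_eq_zero]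
    intro t _
    rw [if_neg]
    rintro ⟨h1, h2⟩
    exact h (h1.symm.trans h2)

lemma casimir_count_lemma (n : ℕ) :
    ∑ p ∈ Finset.univ.filter (fun p : Fin n × Fin n => p.1 < p.2),
      (Matrix.single p.1 p.1 (1:ℂ) + Matrix.single p.2 p.2 (1:ℂ))
    = (n - 1 : ℕ) • (1 : Matrix (Fin n) (Fin n) ℂ) := by
  rw [Finset.sum_add_distrib]
  have hswap : ∑ p ∈ Finset.univ.filter (fun p : Fin n × Fin n => p.1 < p.2),
      Matrix.single p.2 p.2 (1:ℂ)
      = ∑ p ∈ Finset.univ.filter (fun p : Fin n × Fin n => p.2 < p.1),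
      Matrix.single p.1 p.1 (1:ℂ) := by
    apply Finset.sum_nbij' (fun p => p.swap) (fun p => p.swap) <;>
      simp [Finset.mem_filter]
  rw [hswap, ← Finset.sum_union]
  · have hset : (Finset.univ.filter (fun p : Fin n × Fin n => p.1 < p.2)) ∪
        (Finset.univ.filter (fun p : Fin n × Fin n => p.2 < p.1))
        = Finset.univ.filter (fun p : Fin n × Fin n => p.1 ≠ p.2) := by
      ext p
      simp only [Finset.mem_union, Finset.mem_filter, Finset.mem_univ, true_and]
      constructor
      · rintro (h | h) <;> [exact h.ne; exact h.ne']
      · intro h; exact h.lt_or_gt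
    rw [hset, Finset.sum_filter, Fintype.sum_prod_type]
    have : ∀ r : Fin n, (∑ s : Fin n, if r ≠ s then Matrix.single r r (1:ℂ) else 0)
        = (n-1 : ℕ) • Matrix.single r r (1:ℂ) := by
      intro r
      rw [← Finset.sum_filter, Finset.sum_const]
      congr 1
      rw [Finset.filter_ne, Finset.card_erase_of_mem (Finset.mem_univ r), Finset.card_univ,
        Fintype.card_fin]
    simp only [this, ← Finset.smul_sum, casimir_sum_diag_one]
  · rw [Finset.disjoint_filter]
    intro p _ h h'
    exact absurd h' (not_lt_of_gt h)

/-- with `B⁺` the standard orthonormal basis of `u(n)` and `B⁻ = i·B⁺`,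
`∑_{Z ∈ B⁺} Z² − ∑_{Z ∈ B⁻} Z² = −2n·Iₙ`. -/
theorem casimir_glnC (n : ℕ) :
    ((∑ p ∈ Finset.univ.filter (fun p : Fin n × Fin n => p.1 < p.2),
        (((Real.sqrt 2 : ℂ)⁻¹ •
          (Matrix.single p.1 p.2 (1 : ℂ) - Matrix.single p.2 p.1 (1 : ℂ))) ^ 2
        + ((Real.sqrt 2 : ℂ)⁻¹ • Complex.I •
          (Matrix.single p.1 p.2 (1 : ℂ) + Matrix.single p.2 p.1 (1 : ℂ))) ^ 2))
      + ∑ t : Fin n, (Complex.I • Matrix.single t t (1 : ℂ)) ^ 2)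
    - ((∑ p ∈ Finset.univ.filter (fun p : Fin n × Fin n => p.1 < p.2),
        ((Complex.I • ((Real.sqrt 2 : ℂ)⁻¹ •
          (Matrix.single p.1 p.2 (1 : ℂ) - Matrix.single p.2 p.1 (1 : ℂ)))) ^ 2
        + (Complex.I • ((Real.sqrt 2 : ℂ)⁻¹ • Complex.I •
          (Matrix.single p.1 p.2 (1 : ℂ) + Matrix.single p.2 p.1 (1 : ℂ)))) ^ 2))
      + ∑ t : Fin n, (Complex.I • Complex.I • Matrix.single t t (1 : ℂ)) ^ 2)
    = (-(2 * n : ℂ)) • (1 : Matrix (Fin n) (Fin n) ℂ) := by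
  have key : ∀ M : Matrix (Fin n) (Fin n) ℂ, (Complex.I • M) ^ 2 = -(M ^ 2) := by
    intro M
    rw [smul_pow, Complex.I_sq, neg_one_smul]
  have hsq : ∀ t : Fin n, (Matrix.single t t (1:ℂ)) ^ 2 = Matrix.single t t 1 := by
    intro t
    rw [sq, single_mul_single_same, one_mul]
  have hP : ∑ p ∈ Finset.univ.filter (fun p : Fin n × Fin n => p.1 < p.2),
      (((Real.sqrt 2 : ℂ)⁻¹ •
          (Matrix.single p.1 p.2 (1 : ℂ) - Matrix.single p.2 p.1 (1 : ℂ))) ^ 2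
        + ((Real.sqrt 2 : ℂ)⁻¹ • Complex.I •
          (Matrix.single p.1 p.2 (1 : ℂ) + Matrix.single p.2 p.1 (1 : ℂ))) ^ 2)
      = -((n - 1 : ℕ) • (1 : Matrix (Fin n) (Fin n) ℂ)) := by
    rw [Finset.sum_congr rfl (fun p hp => casimir_pair_term n p.1 p.2
      (ne_of_lt (Finset.mem_filter.mp hp).2)), Finset.sum_neg_distrib,
      casimir_count_lemma]
  simp only [key, neg_neg, hsq, ← neg_add, Finset.sum_neg_distrib]
  rw [hP, casimir_sum_diag_one]
  rcases n with _ | m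
  · apply Subsingleton.elim
  · simp only [Nat.add_sub_cancel]
    rw [← Nat.cast_smul_eq_nsmul ℂ]
    push_cast
    module
end

section
/- Let B⁺ be the set of 2n×2n complex matrices consisting of: (1/√2)[[0, iX_{rs}],[iX_{rs}, 0]], (1/√2)[[0, X_{rs}],[−X_{rs}, 0]], (1/√2)[[iX_{rs}, 0],[0, −iX_{rs}]], (1/√2)[[Y_{rs}, 0],[0, Y_{rs}]] for 1 ≤ r < s ≤ n, together with (1/√2)[[0, D_t],[−D_t, 0]], (1/√2)[[iD_t, 0],[0, −iD_t]], (1/√2)[[0, iD_t],[iD_t, 0]] for 1 ≤ t ≤ n, where X_{rs} = (E_{rs}+E_{sr})/√2, Y_{rs} = (E_{rs}−E_{sr})/√2, D_t = E_{tt}. Then ∑_{Z ∈ B⁺} Z² = −((2n+1)/2) · I_{2n}. -/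
open Matrix

/-- `X_{rs} = (E_{rs}+E_{sr})/√2` -/
noncomputable def Xm (n : ℕ) (r s : Fin n) : Matrix (Fin n) (Fin n) ℂ :=
  (Real.sqrt 2 : ℂ)⁻¹ • (Matrix.single r s (1 : ℂ) + Matrix.single s r (1 : ℂ))

/-- `Y_{rs} = (E_{rs}−E_{sr})/√2` -/
noncomputable def Ym (n : ℕ) (r s : Fin n) : Matrix (Fin n) (Fin n) ℂ :=
  (Real.sqrt 2 : ℂ)⁻¹ • (Matrix.single r s (1 : ℂ) - Matrix.single s r (1 : ℂ))

/-- `D_t = E_{tt}` -/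
def Dm (n : ℕ) (t : Fin n) : Matrix (Fin n) (Fin n) ℂ := Matrix.single t t (1 : ℂ)

namespace CasimirAux

lemma cc : ((Real.sqrt 2 : ℂ)⁻¹) * ((Real.sqrt 2 : ℂ)⁻¹) = (2:ℂ)⁻¹ := by
  rw [← mul_inv, ← Complex.ofReal_mul, Real.mul_self_sqrt (by norm_num)]
  norm_num

variable {n : ℕ}


lemma fromBlocks_congr {A B : Matrix (Fin n) (Fin n) ℂ} (h : A = B) :
    fromBlocks A 0 0 A = fromBlocks B 0 0 B := by rw [h]

lemma Xsq (r s : Fin n) (h : r ≠ s) :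
    Xm n r s * Xm n r s = (2:ℂ)⁻¹ • (Matrix.single r r (1:ℂ) + Matrix.single s s 1) := by
  unfold Xm
  rw [Matrix.smul_mul, Matrix.mul_smul, smul_smul, cc]
  congr 1
  simp [add_mul, mul_add, h, h.symm, add_comm]

lemma Ysq (r s : Fin n) (h : r ≠ s) :
    Ym n r s * Ym n r s = (-(2:ℂ)⁻¹) • (Matrix.single r r (1:ℂ) + Matrix.single s s 1) := by
  unfold Ym
  rw [Matrix.smul_mul, Matrix.mul_smul, smul_smul, cc]
  rw [neg_smul, ← smul_neg]
  congr 1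
  simp only [sub_mul, mul_sub, single_mul_single_same, one_mul,
    single_mul_single_of_ne, h, h.symm, ne_eq, not_false_eq_true, smul_zero]
  abel

lemma Dsq (t : Fin n) : Dm n t * Dm n t = Dm n t := by
  simp [Dm]

lemma pairterm (r s : Fin n) (h : r ≠ s) :
    ((Real.sqrt 2 : ℂ)⁻¹ •
        fromBlocks 0 (Complex.I • Xm n r s) (Complex.I • Xm n r s) 0) ^ 2
    + ((Real.sqrt 2 : ℂ)⁻¹ •
        fromBlocks 0 (Xm n r s) (-(Xm n r s)) 0) ^ 2
    + ((Real.sqrt 2 : ℂ)⁻¹ •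
        fromBlocks (Complex.I • Xm n r s) 0 0 (-(Complex.I • Xm n r s))) ^ 2
    + ((Real.sqrt 2 : ℂ)⁻¹ •
        fromBlocks (Ym n r s) 0 0 (Ym n r s)) ^ 2
    = fromBlocks ((-1 : ℂ) • (Matrix.single r r 1 + Matrix.single s s 1)) 0 0
        ((-1 : ℂ) • (Matrix.single r r 1 + Matrix.single s s 1)) := by
  simp only [pow_two, Matrix.smul_mul, Matrix.mul_smul, smul_smul, cc,
    fromBlocks_multiply, Matrix.mul_zero, Matrix.zero_mul, add_zero, zero_add,
    Matrix.neg_mul, Matrix.mul_neg, neg_neg, Xsq r s h, Ysq r s h, ← mul_assoc,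
    Complex.I_mul_I, neg_smul, one_smul, smul_neg, neg_mul, one_mul]
  simp only [neg_zero, add_zero, zero_add, smul_zero, fromBlocks_smul, fromBlocks_add]
  exact fromBlocks_congr (by module)

lemma diagterm (t : Fin n) :
    ((Real.sqrt 2 : ℂ)⁻¹ • fromBlocks 0 (Dm n t) (-(Dm n t)) 0) ^ 2
    + ((Real.sqrt 2 : ℂ)⁻¹ •
        fromBlocks (Complex.I • Dm n t) 0 0 (-(Complex.I • Dm n t))) ^ 2
    + ((Real.sqrt 2 : ℂ)⁻¹ •
        fromBlocks 0 (Complex.I • Dm n t) (Complex.I • Dm n t) 0) ^ 2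
    = fromBlocks ((-(3/2) : ℂ) • Dm n t) 0 0 ((-(3/2) : ℂ) • Dm n t) := by
  simp only [pow_two, Matrix.smul_mul, Matrix.mul_smul, smul_smul, cc,
    fromBlocks_multiply, Matrix.mul_zero, Matrix.zero_mul, add_zero, zero_add,
    Matrix.neg_mul, Matrix.mul_neg, neg_neg, Dsq t, ← mul_assoc,
    Complex.I_mul_I, neg_smul, one_smul, smul_neg, neg_mul, one_mul]
  simp only [neg_zero, add_zero, zero_add, smul_zero, fromBlocks_smul, fromBlocks_add]
  exact fromBlocks_congr (by module)

lemma sum_fromBlocks {ι : Type*} (s : Finset ι) (f : ι → Matrix (Fin n) (Fin n) ℂ) :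
    ∑ i ∈ s, fromBlocks (f i) 0 0 (f i)
      = fromBlocks (∑ i ∈ s, f i) 0 0 (∑ i ∈ s, f i) := by
  induction s using Finset.cons_induction with
  | empty => ext (i|i) (j|j) <;> simp
  | cons a s ha ih => simp [Finset.sum_cons, ih, fromBlocks_add]

lemma diag_one : ∑ t : Fin n, Dm n t = (1 : Matrix (Fin n) (Fin n) ℂ) := by
  ext i j
  rw [Matrix.sum_apply]
  by_cases h : i = j
  · subst h
    simp [Dm, Matrix.single, Matrix.one_apply]
  · simp only [Matrix.one_apply, if_neg h, Dm]
    simp [Matrix.single, Finset.filter_eq_empty_iff]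
    exact h

lemma pairsum :
    ∑ p ∈ Finset.univ.filter (fun p : Fin n × Fin n => p.1 < p.2),
      (Matrix.single p.1 p.1 (1:ℂ) + Matrix.single p.2 p.2 1)
    = ((n:ℂ) - 1) • (1 : Matrix (Fin n) (Fin n) ℂ) := by
  rw [Finset.sum_add_distrib]
  have hswap : ∑ p ∈ Finset.univ.filter (fun p : Fin n × Fin n => p.1 < p.2),
      Matrix.single p.2 p.2 (1:ℂ)
      = ∑ p ∈ Finset.univ.filter (fun p : Fin n × Fin n => p.2 < p.1),
      Matrix.single p.1 p.1 (1:ℂ) := by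
    apply Finset.sum_nbij' (fun p => Prod.swap p) (fun p => Prod.swap p) <;>
      simp [Finset.mem_filter]
  rw [hswap, ← Finset.sum_union]
  · have hunion : (Finset.univ.filter (fun p : Fin n × Fin n => p.1 < p.2))
        ∪ (Finset.univ.filter (fun p : Fin n × Fin n => p.2 < p.1))
        = Finset.univ.filter (fun p : Fin n × Fin n => p.1 ≠ p.2) := by
      ext p
      simp only [Finset.mem_union, Finset.mem_filter, Finset.mem_univ, true_and]
      exact lt_or_lt_iff_ne
    rw [hunion, Finset.sum_filter, Fintype.sum_prod_type]
    have inner : ∀ r : Fin n, ∑ s : Fin n, (if r ≠ s then Matrix.single r r (1:ℂ) else 0)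
        = ((n:ℂ)-1) • Matrix.single r r 1 := by
      intro r
      simp [Finset.sum_ite, Finset.filter_ne, Finset.card_erase_of_mem]
      rw [Nat.cast_sub r.pos, Nat.cast_one]
    rw [Finset.sum_congr rfl (fun r _ => inner r), ← Finset.smul_sum]
    congr 1
    exact diag_one
  · rw [Finset.disjoint_left]
    rintro p hp hp'
    simp only [Finset.mem_filter, Finset.mem_univ, true_and] at hp hp'
    exact absurd hp' (not_lt.mpr hp.le)

end CasimirAux

open CasimirAux in
/-- the sum of squares of the standard orthonormal basis `B⁺` of
the compact symplectic Lie algebra `sp(n) ⊂ ℂ^{2n×2n}` equals `−((2n+1)/2)·I_{2n}`. -/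
theorem casimir_spn (n : ℕ) :
    (∑ p ∈ Finset.univ.filter (fun p : Fin n × Fin n => p.1 < p.2),
      (((Real.sqrt 2 : ℂ)⁻¹ •
          fromBlocks 0 (Complex.I • Xm n p.1 p.2) (Complex.I • Xm n p.1 p.2) 0) ^ 2
      + ((Real.sqrt 2 : ℂ)⁻¹ •
          fromBlocks 0 (Xm n p.1 p.2) (-(Xm n p.1 p.2)) 0) ^ 2
      + ((Real.sqrt 2 : ℂ)⁻¹ •
          fromBlocks (Complex.I • Xm n p.1 p.2) 0 0 (-(Complex.I • Xm n p.1 p.2))) ^ 2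
      + ((Real.sqrt 2 : ℂ)⁻¹ •
          fromBlocks (Ym n p.1 p.2) 0 0 (Ym n p.1 p.2)) ^ 2))
    + ∑ t : Fin n,
      (((Real.sqrt 2 : ℂ)⁻¹ • fromBlocks 0 (Dm n t) (-(Dm n t)) 0) ^ 2
      + ((Real.sqrt 2 : ℂ)⁻¹ •
          fromBlocks (Complex.I • Dm n t) 0 0 (-(Complex.I • Dm n t))) ^ 2
      + ((Real.sqrt 2 : ℂ)⁻¹ •
          fromBlocks 0 (Complex.I • Dm n t) (Complex.I • Dm n t) 0) ^ 2)
    = (-((2 * (n : ℂ) + 1) / 2)) • (1 : Matrix (Fin n ⊕ Fin n) (Fin n ⊕ Fin n) ℂ) := by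
  rw [Finset.sum_congr rfl
    (fun p hp => pairterm p.1 p.2 (ne_of_lt (Finset.mem_filter.mp hp).2))]
  rw [Finset.sum_congr rfl (fun t _ => diagterm t)]
  rw [sum_fromBlocks, sum_fromBlocks, ← Finset.smul_sum, ← Finset.smul_sum,
    pairsum, diag_one, fromBlocks_add, ← fromBlocks_one (l := Fin n) (m := Fin n),
    fromBlocks_smul]
  simp only [add_zero, smul_zero]
  exact fromBlocks_congr (by module)
end

section
/- Let A be a commutative ℂ-algebra, τ : A → A ℂ-linear and κ : A × A → A symmetric ℂ-bilinear with τ(φψ) = τ(φ)ψ + 2κ(φ,ψ) + φτ(ψ) and κ(φψ, χ) = φκ(ψ,χ) + ψκ(φ,χ). If φ ∈ A satisfies τ(φ) = λφ and κ(φ,φ) = μφ² for some λ, μ ∈ ℂ, then for every positive integer d: τ(φ^d) = (dλ + d(d−1)μ)·φ^d and κ(φ^d, φ^d) = d²μ·φ^{2d}. -/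
/-- powers of an eigenfunction with eigenvalues `(λ, μ)` satisfy
`τ(φ^d) = (dλ + d(d−1)μ)·φ^d` and `κ(φ^d, φ^d) = d²μ·φ^{2d}`. -/
theorem eigen_power (A : Type*) [CommRing A] [Algebra ℂ A]
    (τ : A →ₗ[ℂ] A) (κ : A →ₗ[ℂ] A →ₗ[ℂ] A)
    (hsymm : ∀ x y : A, κ x y = κ y x)
    (hτ : ∀ x y : A, τ (x * y) = τ x * y + 2 * κ x y + x * τ y)
    (hκ : ∀ x y z : A, κ (x * y) z = x * κ y z + y * κ x z)
    (φ : A) (lam mu : ℂ)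
    (h1 : τ φ = lam • φ) (h2 : κ φ φ = mu • (φ ^ 2))
    (d : ℕ) (hd : 0 < d) :
    τ (φ ^ d) = ((d : ℂ) * lam + (d : ℂ) * ((d : ℂ) - 1) * mu) • (φ ^ d) ∧
    κ (φ ^ d) (φ ^ d) = ((d : ℂ) ^ 2 * mu) • (φ ^ (2 * d)) := by
  -- κ(1, z) = 0
  have hone : ∀ z : A, κ 1 z = 0 := by
    intro z
    have := hκ 1 1 z
    simp at this
    linear_combination this
  -- κ(φ^b, φ) = b μ φ^(b+1)
  have K1 : ∀ b : ℕ, κ (φ ^ b) φ = ((b : ℂ) * mu) • (φ ^ (b + 1)) := by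
    intro b
    induction b with
    | zero => simp [hone]
    | succ b ih =>
      have : κ (φ ^ b * φ) φ = φ ^ b * κ φ φ + φ * κ (φ ^ b) φ := hκ _ _ _
      rw [pow_succ]
      rw [this, h2, ih]
      push_cast
      rw [mul_smul_comm, mul_smul_comm]
      rw [show φ ^ b * φ ^ 2 = φ ^ (b + 1 + 1) by ring,
        show φ * φ ^ (b + 1) = φ ^ (b + 1 + 1) by ring]
      rw [← add_smul]
      ring_nf
  -- κ(φ^a, φ^b) = a b μ φ^(a+b)
  have K : ∀ a b : ℕ, κ (φ ^ a) (φ ^ b) = ((a : ℂ) * (b : ℂ) * mu) • (φ ^ (a + b)) := by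
    intro a b
    induction a with
    | zero => simp [hone]
    | succ a ih =>
      rw [pow_succ, hκ, ih, hsymm φ, K1]
      push_cast
      rw [mul_smul_comm, mul_smul_comm]
      rw [show φ ^ a * φ ^ (b + 1) = φ ^ (a + 1 + b) by ring,
        show φ * φ ^ (a + b) = φ ^ (a + 1 + b) by ring]
      rw [← add_smul]
      ring_nf
  -- τ(φ^d)
  have T : ∀ e : ℕ, τ (φ ^ (e + 1)) =
      (((e : ℂ) + 1) * lam + ((e : ℂ) + 1) * (e : ℂ) * mu) • (φ ^ (e + 1)) := by
    intro e
    induction e with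
    | zero => simpa using h1
    | succ e ih =>
      rw [pow_succ, hτ, ih, K1, h1]
      rw [smul_mul_assoc, mul_smul_comm, mul_smul_comm]
      rw [show φ ^ (e + 1) * φ = φ ^ (e + 1 + 1) by ring,
        show (2 : A) * φ ^ (e + 1 + 1) = (2 : ℂ) • φ ^ (e + 1 + 1) by
          rw [two_smul]; ring]
      rw [smul_smul, ← add_smul, ← add_smul]
      push_cast
      ring_nf
  obtain ⟨e, rfl⟩ : ∃ e, d = e + 1 := ⟨d - 1, (Nat.succ_pred_eq_of_pos hd).symm⟩
  constructor
  · rw [T e]; push_cast; ring_nf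
  · rw [K]
    rw [show (e + 1) + (e + 1) = 2 * (e + 1) by ring]
    push_cast
    ring_nf
end

section
/- Let A be a commutative ℂ-algebra, τ : A → A ℂ-linear and κ : A × A → A symmetric ℂ-bilinear with τ(φψ) = τ(φ)ψ + 2κ(φ,ψ) + φτ(ψ) and κ(φψ, χ) = φκ(ψ,χ) + ψκ(φ,χ). Suppose φ₁, …, φ_n ∈ A and λ, μ ∈ ℂ satisfy τ(φᵢ) = λφᵢ and κ(φᵢ, φⱼ) = μφᵢφⱼ for all i, j. Then for any monomial M = φ₁^{d₁}⋯φ_n^{d_n} of total degree d = d₁ + ⋯ + d_n, one has τ(M) = (dλ + d(d−1)μ)·M, and for any two such monomials M, N of degree d, κ(M, N) = d²μ·M·N. -/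
section aux
variable {A : Type*} [CommRing A] [Algebra ℂ A]
variable (τ : A →ₗ[ℂ] A) (κ : A →ₗ[ℂ] A →ₗ[ℂ] A)
variable {n : ℕ} (φ : Fin n → A) (lam mu : ℂ)

lemma kappa_one (hκ : ∀ x y z : A, κ (x * y) z = x * κ y z + y * κ x z) (z : A) :
    κ 1 z = 0 := by
  have h := hκ 1 1 z
  simp only [one_mul] at h
  have := congrArg (· - (κ 1) z) h
  simpa using this.symm

lemma kappa_single
    (hκ : ∀ x y z : A, κ (x * y) z = x * κ y z + y * κ x z)
    (h2 : ∀ i j, κ (φ i) (φ j) = mu • (φ i * φ j))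
    (s : Multiset (Fin n)) (j : Fin n) :
    κ ((s.map φ).prod) (φ j)
      = ((Multiset.card s : ℂ) * mu) • ((s.map φ).prod * φ j) := by
  induction s using Multiset.induction with
  | empty => simp [kappa_one κ hκ]
  | cons a s ih =>
    simp only [Multiset.map_cons, Multiset.prod_cons, hκ, ih, h2, Multiset.card_cons]
    push_cast
    simp only [Algebra.smul_def, map_add, map_mul, map_one]
    ring
end aux

section aux2
variable {A : Type*} [CommRing A] [Algebra ℂ A]
variable (τ : A →ₗ[ℂ] A) (κ : A →ₗ[ℂ] A →ₗ[ℂ] A)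
variable {n : ℕ} (φ : Fin n → A) (lam mu : ℂ)

lemma kappa_pair
    (hsymm : ∀ x y : A, κ x y = κ y x)
    (hκ : ∀ x y z : A, κ (x * y) z = x * κ y z + y * κ x z)
    (h2 : ∀ i j, κ (φ i) (φ j) = mu • (φ i * φ j))
    (s t : Multiset (Fin n)) :
    κ ((s.map φ).prod) ((t.map φ).prod)
      = ((Multiset.card s : ℂ) * (Multiset.card t : ℂ) * mu)
        • ((s.map φ).prod * (t.map φ).prod) := by
  induction t using Multiset.induction with
  | empty => simp [hsymm _ (1 : A), kappa_one κ hκ]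
  | cons a t ih =>
    rw [Multiset.map_cons, Multiset.prod_cons, hsymm, hκ, hsymm _ ((s.map φ).prod), ih,
      hsymm _ ((s.map φ).prod), kappa_single κ φ mu hκ h2, Multiset.card_cons]
    push_cast
    simp only [Algebra.smul_def, map_add, map_mul, map_one]
    ring

lemma tau_mon
    (hsymm : ∀ x y : A, κ x y = κ y x)
    (hτ : ∀ x y : A, τ (x * y) = τ x * y + 2 * κ x y + x * τ y)
    (hκ : ∀ x y z : A, κ (x * y) z = x * κ y z + y * κ x z)
    (h1 : ∀ i, τ (φ i) = lam • φ i)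
    (h2 : ∀ i j, κ (φ i) (φ j) = mu • (φ i * φ j))
    (s : Multiset (Fin n)) :
    τ ((s.map φ).prod)
      = ((Multiset.card s : ℂ) * lam
          + (Multiset.card s : ℂ) * ((Multiset.card s : ℂ) - 1) * mu)
        • ((s.map φ).prod) := by
  induction s using Multiset.induction with
  | empty =>
    have h := hτ 1 1
    simp only [one_mul, mul_one, kappa_one κ hκ, mul_zero, add_zero] at h
    have : τ 1 = 0 := by
      have := congrArg (· - τ (1 : A)) h
      simpa using this.symm
    simp [this]
  | cons a s ih =>
    rw [Multiset.map_cons, Multiset.prod_cons, hτ, ih, h1,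
      hsymm _ ((s.map φ).prod), kappa_single κ φ mu hκ h2, Multiset.card_cons]
    push_cast
    simp only [Algebra.smul_def, map_add, map_mul, map_one, map_sub]
    ring
end aux2

lemma mon_as_multiset {A : Type*} [CommRing A] {n : ℕ} (φ : Fin n → A) (dm : Fin n → ℕ) :
    (((Finset.univ.val.bind fun i => Multiset.replicate (dm i) i)).map φ).prod
      = ∏ i, φ i ^ dm i := by
  rw [Multiset.map_bind, Multiset.prod_bind]
  simp [Finset.prod_eq_multiset_prod]

lemma mon_card {n : ℕ} (dm : Fin n → ℕ) :
    Multiset.card (Finset.univ.val.bind fun i => Multiset.replicate (dm i) i)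
      = ∑ i, dm i := by
  simp [Multiset.card_bind, Finset.sum]

/-- monomials of total degree `d` in an eigenfamily with
eigenvalues `(λ, μ)` form an eigenfamily with eigenvalues `(dλ + d(d−1)μ, d²μ)`. -/
theorem eigen_monomials (A : Type*) [CommRing A] [Algebra ℂ A]
    (τ : A →ₗ[ℂ] A) (κ : A →ₗ[ℂ] A →ₗ[ℂ] A)
    (hsymm : ∀ x y : A, κ x y = κ y x)
    (hτ : ∀ x y : A, τ (x * y) = τ x * y + 2 * κ x y + x * τ y)
    (hκ : ∀ x y z : A, κ (x * y) z = x * κ y z + y * κ x z)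
    (n : ℕ) (φ : Fin n → A) (lam mu : ℂ)
    (h1 : ∀ i, τ (φ i) = lam • φ i)
    (h2 : ∀ i j, κ (φ i) (φ j) = mu • (φ i * φ j))
    (dm em : Fin n → ℕ) (d : ℕ)
    (hdm : ∑ i, dm i = d) (hem : ∑ i, em i = d) :
    τ (∏ i, φ i ^ dm i)
        = ((d : ℂ) * lam + (d : ℂ) * ((d : ℂ) - 1) * mu) • (∏ i, φ i ^ dm i) ∧
    κ (∏ i, φ i ^ dm i) (∏ i, φ i ^ em i)
        = ((d : ℂ) ^ 2 * mu) • ((∏ i, φ i ^ dm i) * ∏ i, φ i ^ em i) := by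
  rw [← mon_as_multiset φ dm, ← mon_as_multiset φ em]
  constructor
  · rw [tau_mon τ κ φ lam mu hsymm hτ hκ h1 h2, mon_card, hdm]
  · rw [kappa_pair κ φ mu hsymm hκ h2, mon_card, mon_card, hdm, hem, sq]
end

section
/- Let A be a commutative ℂ-algebra, τ : A → A ℂ-linear and κ : A × A → A symmetric bilinear satisfying τ(φψ) = τ(φ)ψ + 2κ(φ,ψ) + φτ(ψ) and κ(φψ,χ) = φκ(ψ,χ) + ψκ(φ,χ). Suppose P, Q ∈ A and λ̃, μ̃ ∈ ℂ satisfy τ(P) = λ̃P, τ(Q) = λ̃Q, κ(P,P) = μ̃P², κ(P,Q) = μ̃PQ, κ(Q,Q) = μ̃Q². If Q is invertible in A, then the quotient h = P·Q^{−1} satisfies τ(h) = 0 and κ(h,h) = 0. -/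
/-- the quotient of two eigenfunctions with the same eigenvalues
`(λ̃, μ̃)` is harmonic and horizontally conformal: `τ(PQ⁻¹) = 0`, `κ(PQ⁻¹,PQ⁻¹) = 0`. -/
theorem eigen_quotient (A : Type*) [CommRing A] [Algebra ℂ A]
    (τ : A →ₗ[ℂ] A) (κ : A →ₗ[ℂ] A →ₗ[ℂ] A)
    (hsymm : ∀ x y : A, κ x y = κ y x)
    (hτ : ∀ x y : A, τ (x * y) = τ x * y + 2 * κ x y + x * τ y)
    (hκ : ∀ x y z : A, κ (x * y) z = x * κ y z + y * κ x z)
    (P Q : A) (tlam tmu : ℂ)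
    (h1 : τ P = tlam • P) (h2 : τ Q = tlam • Q)
    (h3 : κ P P = tmu • (P ^ 2)) (h4 : κ P Q = tmu • (P * Q))
    (h5 : κ Q Q = tmu • (Q ^ 2))
    (Qi : A) (hQ : Q * Qi = 1) :
    τ (P * Qi) = 0 ∧ κ (P * Qi) (P * Qi) = 0 := by
  set a : A := algebraMap ℂ A tlam with ha
  set b : A := algebraMap ℂ A tmu with hb
  have h1' : τ P = a * P := by rw [h1, Algebra.smul_def]
  have h2' : τ Q = a * Q := by rw [h2, Algebra.smul_def]
  have h3' : κ P P = b * P ^ 2 := by rw [h3, Algebra.smul_def]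
  have h4' : κ P Q = b * (P * Q) := by rw [h4, Algebra.smul_def]
  have h5' : κ Q Q = b * Q ^ 2 := by rw [h5, Algebra.smul_def]
  -- κ(1, z) = 0
  have k1 : ∀ z : A, κ 1 z = 0 := by
    intro z
    have h := hκ 1 1 z
    simp only [one_mul] at h
    linear_combination -h
  -- τ(1) = 0
  have t1 : τ (1 : A) = 0 := by
    have h := hτ 1 1
    simp only [one_mul] at h
    linear_combination -h - 2 * k1 1
  -- κ(Qi, z) = -Qi² κ(Q, z)
  have kQi : ∀ z : A, κ Qi z = -(Qi * Qi) * κ Q z := by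
    intro z
    have h := hκ Q Qi z
    rw [hQ, k1] at h
    linear_combination -Qi * h - κ Qi z * hQ
  -- τ(Qi)
  have e2 : τ Q * Qi + 2 * κ Qi Q + Q * τ Qi = 0 := by
    have h := hτ Q Qi
    rw [hQ, t1, hsymm Q Qi] at h
    linear_combination -h
  have tQi : τ Qi = -(Qi * Qi) * τ Q + 2 * (Qi * Qi * Qi) * κ Q Q := by
    linear_combination Qi * e2 - 2 * Qi * (kQi Q) - τ Qi * hQ
  have tau0 : τ (P * Qi) = 0 := by
    have h := hτ P Qi
    rw [hsymm P Qi, kQi P, tQi, h1', h2', h5', hsymm Q P, h4'] at h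
    linear_combination h + (-(a * P * Qi) + 2 * b * P * Qi * Qi * Q) * hQ
  refine ⟨tau0, ?_⟩
  have kPQi : κ P Qi = -(Qi * Qi) * (b * (P * Q)) := by
    rw [hsymm P Qi, kQi P, hsymm Q P, h4']
  have kQQi : κ Q Qi = -(Qi * Qi) * (b * Q ^ 2) := by
    rw [hsymm Q Qi, kQi Q, h5']
  have kQiQi : κ Qi Qi = -(Qi * Qi) * (-(Qi * Qi) * (b * Q ^ 2)) := by
    rw [kQi Qi, kQQi]
  have e3 : κ Qi (P * Qi) = P * κ Qi Qi + Qi * κ P Qi := by rw [hsymm, hκ]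
  have e4 : κ P (P * Qi) = P * κ Qi P + Qi * κ P P := by rw [hsymm, hκ]
  have h := hκ P Qi (P * Qi)
  rw [e3, e4, hsymm Qi P, kPQi, kQiQi, h3'] at h
  linear_combination h + ((b * P * P * Qi * Qi - b * P * P * Qi * Qi * Qi * Q) + 2 * b * P * P * Qi * Qi * (Q * Qi - 1)) * hQ
end
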